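/- arXiv:math/0609656 — 6 statements merged into one kernel-verified Lean document; each statement's English description precedes it below -/
import Mathlib

section
/- For any positive integer m and any primitive m-th root of unity η, the sum over j from 1 to m-1 of η^{-j}/(1-η^{-j})² equals -(m²-1)/12. -/
open Finset

private lemma sum_id_cast (n : ℕ) : ∑ k ∈ range n, (k:ℂ) = n*(n-1)/2 := by
  induction n with
  | zero => simp
  | succ n ih => rw [sum_range_succ, ih]; push_cast; ring

private lemma sum_sq_cast (n : ℕ) : ∑ k ∈ range n, (k:ℂ)^2 = n*(n-1)*(2*n-1)/6 := by
  induction n with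
  | zero => simp
  | succ n ih => rw [sum_range_succ, ih]; push_cast; ring

private lemma aux_telescope (x : ℂ) (n : ℕ) :
    (1-x) * ∑ k ∈ range n, (k:ℂ)*x^k
      = (∑ k ∈ range n, x^k) - 1 - ((n:ℂ)-1)*x^n := by
  induction n with
  | zero => simp
  | succ n ih =>
    rw [sum_range_succ, sum_range_succ, mul_add, ih]
    push_cast; ring

private lemma geom_zero (m : ℕ) (x : ℂ) (h1 : x ^ m = 1) (hne : x ≠ 1) :
    ∑ k ∈ range m, x ^ k = 0 := by
  rw [geom_sum_eq hne, h1, sub_self, zero_div]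

private lemma root_val (m : ℕ) (hm : 0 < m) (ζ : ℂ) (h1 : ζ ^ m = 1) (hne : ζ ≠ 1) :
    ζ/(1-ζ)^2 = (∑ k ∈ range m, (k:ℂ)*ζ^k)^2 * ζ / (m:ℂ)^2 := by
  set G := ∑ k ∈ range m, (k:ℂ)*ζ^k with hGdef
  have hG : (1-ζ) * G = -(m:ℂ) := by
    rw [hGdef, aux_telescope, geom_zero m ζ h1 hne, h1]; ring
  have hmne : (m:ℂ) ≠ 0 := Nat.cast_ne_zero.mpr hm.ne'
  have hζne : (1:ℂ) - ζ ≠ 0 := sub_ne_zero.mpr (Ne.symm hne)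
  have hm2 : (m:ℂ)^2 = ((1-ζ)*G)^2 := by rw [hG]; ring
  rw [hm2]
  have hGne : G ≠ 0 := by
    intro h
    rw [h, mul_zero] at hG
    exact hmne (by linear_combination hG)
  field_simp

private lemma Tval (m : ℕ) (hm : 0 < m) (θ : ℂ) (hθ : IsPrimitiveRoot θ m) (n : ℕ) :
    ∑ j ∈ Ico 1 m, (θ^n)^j = (if m ∣ n then (m:ℂ) else 0) - 1 := by
  have h0 : ∑ j ∈ range m, (θ^n)^j = (if m ∣ n then (m:ℂ) else 0) := by
    by_cases h : m ∣ n
    · rw [if_pos h]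
      have : θ ^ n = 1 := (hθ.pow_eq_one_iff_dvd n).mpr h
      simp [this]
    · rw [if_neg h]
      refine geom_zero m _ ?_ ?_
      · rw [← pow_mul, mul_comm, pow_mul, hθ.pow_eq_one, one_pow]
      · exact fun hc => h ((hθ.pow_eq_one_iff_dvd n).mp hc)
  have h1 : ∑ j ∈ range m, (θ^n)^j = (θ^n)^0 + ∑ j ∈ Ico 1 m, (θ^n)^j := by
    rw [range_eq_Ico, sum_eq_sum_Ico_succ_bot hm]
  rw [h1, pow_zero] at h0
  linear_combination h0

private lemma key (m : ℕ) (hm : 0 < m) (θ : ℂ) (hθ : IsPrimitiveRoot θ m) :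
    ∑ j ∈ Ico 1 m, θ^j/(1-θ^j)^2 = -((m : ℂ) ^ 2 - 1) / 12 := by
  have hmne : (m:ℂ) ≠ 0 := Nat.cast_ne_zero.mpr hm.ne'
  have step1 : ∑ j ∈ Ico 1 m, θ^j/(1-θ^j)^2
      = ∑ j ∈ Ico 1 m, (∑ k ∈ range m, ∑ l ∈ range m,
          (k:ℂ)*(l:ℂ)*(θ^(k+l+1))^j) / (m:ℂ)^2 := by
    refine sum_congr rfl fun j hj => ?_
    rw [mem_Ico] at hj
    have h1 : (θ^j)^m = 1 := by
      rw [← pow_mul, mul_comm, pow_mul, hθ.pow_eq_one, one_pow]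
    have hne : θ^j ≠ 1 := hθ.pow_ne_one_of_pos_of_lt (by omega) hj.2
    rw [root_val m hm _ h1 hne]
    congr 1
    rw [sq, Finset.sum_mul_sum, Finset.sum_mul]
    refine sum_congr rfl fun k _ => ?_
    rw [Finset.sum_mul]
    refine sum_congr rfl fun l _ => ?_
    have hpow : (θ^(k+l+1))^j = (θ^j)^k * (θ^j)^l * θ^j := by
      rw [← pow_mul, ← pow_mul, ← pow_mul, ← pow_add, ← pow_add]
      congr 1
      ring
    rw [hpow]; ring
  rw [step1, ← Finset.sum_div, Finset.sum_comm]
  have step2 : ∀ k ∈ range m, (∑ j ∈ Ico 1 m, ∑ l ∈ range m,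
      (k:ℂ)*(l:ℂ)*(θ^(k+l+1))^j)
      = ∑ l ∈ range m, (k:ℂ)*(l:ℂ)*((if m ∣ k+l+1 then (m:ℂ) else 0) - 1) := by
    intro k _
    rw [Finset.sum_comm]
    refine sum_congr rfl fun l _ => ?_
    rw [← Finset.mul_sum, Tval m hm θ hθ]
  rw [sum_congr rfl step2]
  have step3 : ∀ k ∈ range m, (∑ l ∈ range m,
      (k:ℂ)*(l:ℂ)*((if m ∣ k+l+1 then (m:ℂ) else 0) - 1))
      = (k:ℂ)*((m:ℂ)-1-(k:ℂ))*(m:ℂ) - (k:ℂ) * ∑ l ∈ range m, (l:ℂ) := by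
    intro k hk
    rw [mem_range] at hk
    have expand : ∀ l ∈ range m, (k:ℂ)*(l:ℂ)*((if m ∣ k+l+1 then (m:ℂ) else 0) - 1)
        = (if m ∣ k+l+1 then (k:ℂ)*(l:ℂ)*(m:ℂ) else 0) - (k:ℂ)*(l:ℂ) := by
      intro l _
      by_cases h : m ∣ k+l+1 <;> simp [h] <;> ring
    rw [sum_congr rfl expand, Finset.sum_sub_distrib, ← Finset.mul_sum]
    congr 1
    rw [Finset.sum_eq_single_of_mem (m-1-k)]
    · have heq : k + (m-1-k) + 1 = m := by omega
      have hdvd : m ∣ k + (m-1-k) + 1 := by rw [heq]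
      rw [if_pos hdvd]
      have hcast : ((m-1-k : ℕ):ℂ) = (m:ℂ)-1-(k:ℂ) := by
        have h1 : k + 1 ≤ m := by omega
        push_cast [Nat.sub_sub, Nat.cast_sub (by omega : 1 + k ≤ m)]
        ring
      rw [hcast]
    · rw [mem_range]; omega
    · intro l hl hlne
      rw [mem_range] at hl
      rw [if_neg]
      intro hdvd
      have h1 : k + l + 1 = m :=
        Nat.eq_of_dvd_of_lt_two_mul (by omega) hdvd (by omega)
      omega
  rw [sum_congr rfl step3, Finset.sum_sub_distrib, ← Finset.sum_mul, ← Finset.sum_mul]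
  have e1 : ∑ k ∈ range m, (k:ℂ)*((m:ℂ)-1-(k:ℂ))
      = ((m:ℂ)-1) * (∑ k ∈ range m, (k:ℂ)) - ∑ k ∈ range m, (k:ℂ)^2 := by
    rw [Finset.mul_sum, ← Finset.sum_sub_distrib]
    exact sum_congr rfl fun k _ => by ring
  rw [e1, sum_id_cast, sum_sq_cast]
  field_simp
  ring

/-- For any positive integer `m` and any primitive `m`-th root of unity `η`,
`∑_{j=1}^{m-1} η^{-j}/(1-η^{-j})² = -(m²-1)/12`. -/
theorem stmt0 (m : ℕ) (hm : 0 < m) (η : ℂ) (hη : IsPrimitiveRoot η m) :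
    ∑ j ∈ Finset.Ico 1 m, η ^ (-(j : ℤ)) / (1 - η ^ (-(j : ℤ))) ^ 2
      = -((m : ℂ) ^ 2 - 1) / 12 := by
  have hconv : ∀ j : ℕ, η ^ (-(j : ℤ)) = (η⁻¹)^j := by
    intro j
    rw [zpow_neg, zpow_natCast, inv_pow]
  simp only [hconv]
  exact key m hm η⁻¹ hη.inv
end

section
/- For any positive integer m and primitive m-th root of unity η, and any complex x with x^m ≠ 1, ∑_{j=1}^{m-1} η^{-j} x/(1-η^{-j}x)² = m² x^m/(1-x^m)² - x/(1-x)². -/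
open Finset

lemma prodId (m : ℕ) (hm : 0 < m) (η : ℂ) (hη : IsPrimitiveRoot η m) (x : ℂ) :
    ∏ j ∈ Finset.range m, (1 - η ^ j * x) = 1 - x ^ m := by
  rcases eq_or_ne x 0 with rfl | hx0
  · simp [Nat.pos_iff_ne_zero.mp hm]
  · have hev := congrArg (Polynomial.eval x⁻¹) (X_pow_sub_C_eq_prod hη hm (one_pow m))
    simp only [Polynomial.eval_sub, Polynomial.eval_pow, Polynomial.eval_X, Polynomial.eval_C,
      Polynomial.eval_prod, mul_one] at hev
    calc ∏ j ∈ Finset.range m, (1 - η ^ j * x)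
        = ∏ j ∈ Finset.range m, (x * (x⁻¹ - η ^ j)) := by
          refine Finset.prod_congr rfl fun j _ => ?_
          field_simp
      _ = x ^ m * ∏ j ∈ Finset.range m, (x⁻¹ - η ^ j) := by
          rw [Finset.prod_mul_distrib, Finset.prod_const, Finset.card_range]
      _ = x ^ m * ((x⁻¹) ^ m - 1) := by rw [← hev]
      _ = 1 - x ^ m := by rw [mul_sub, ← mul_pow, mul_inv_cancel₀ hx0, one_pow, mul_one]

lemma term_ne (m : ℕ) (η : ℂ) (hη : IsPrimitiveRoot η m) (x : ℂ) (hx : x ^ m ≠ 1) (j : ℕ) :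
    1 - η ^ j * x ≠ 0 := by
  intro h
  apply hx
  have h1 : η ^ j * x = 1 := by linear_combination -h
  have h2 : (η ^ j) ^ m = 1 := by
    rw [← pow_mul, mul_comm, pow_mul, hη.pow_eq_one, one_pow]
  have := congrArg (· ^ m) h1
  simp only [mul_pow, one_pow, h2, one_mul] at this
  exact this

lemma fId (m : ℕ) (hm : 0 < m) (η : ℂ) (hη : IsPrimitiveRoot η m) (x : ℂ) :
    ∑ j ∈ Finset.range m, η ^ j * ∏ k ∈ (Finset.range m).erase j, (1 - η ^ k * x)
      = m * x ^ (m - 1) := by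
  have hP : HasDerivAt (fun y : ℂ => ∏ j ∈ Finset.range m, (1 - η ^ j * y))
      (∑ j ∈ Finset.range m, (∏ k ∈ (Finset.range m).erase j, (1 - η ^ k * x)) • (-η ^ j)) x := by
    refine HasDerivAt.fun_finsetProd fun j _ => ?_
    simpa using ((hasDerivAt_id x).const_mul (η ^ j)).const_sub 1
  have hfun : (fun y : ℂ => ∏ j ∈ Finset.range m, (1 - η ^ j * y))
      = fun y : ℂ => 1 - y ^ m := funext (prodId m hm η hη)
  rw [hfun] at hP
  have hQ : HasDerivAt (fun y : ℂ => 1 - y ^ m) (-(m * x ^ (m - 1))) x := by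
    simpa using (hasDerivAt_pow m x).const_sub 1
  have key := hP.unique hQ
  have key2 : ∑ j ∈ Finset.range m,
      (∏ k ∈ (Finset.range m).erase j, (1 - η ^ k * x)) • (-η ^ j)
      = ∑ j ∈ Finset.range m, -(η ^ j * ∏ k ∈ (Finset.range m).erase j, (1 - η ^ k * x)) :=
    Finset.sum_congr rfl fun j _ => by simp [smul_eq_mul]; ring
  rw [key2, Finset.sum_neg_distrib] at key
  exact neg_injective key

lemma hId (m : ℕ) (hm : 0 < m) (η : ℂ) (hη : IsPrimitiveRoot η m) (x : ℂ) (hx : x ^ m ≠ 1) :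
    ∑ j ∈ Finset.range m, (1 - η ^ j * x)⁻¹ = m / (1 - x ^ m) := by
  have hne : ∀ j, 1 - η ^ j * x ≠ 0 := term_ne m η hη x hx
  have h1xm : 1 - x ^ m ≠ 0 := sub_ne_zero.mpr (Ne.symm hx)
  have hxm : x * x ^ (m - 1) = x ^ m := by
    conv_rhs => rw [show m = (m - 1) + 1 from (Nat.succ_pred_eq_of_pos hm).symm]
    rw [pow_succ]; ring
  have hprod_erase : ∀ j ∈ Finset.range m,
      (1 - η ^ j * x) * ∏ k ∈ (Finset.range m).erase j, (1 - η ^ k * x) = 1 - x ^ m := by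
    intro j hj
    rw [Finset.mul_prod_erase (Finset.range m) (fun k => 1 - η ^ k * x) hj, prodId m hm η hη]
  have hfdiv : ∑ j ∈ Finset.range m, η ^ j * (1 - η ^ j * x)⁻¹
      = m * x ^ (m - 1) / (1 - x ^ m) := by
    rw [eq_div_iff h1xm, Finset.sum_mul, ← fId m hm η hη x]
    refine Finset.sum_congr rfl fun j hj => ?_
    rw [← hprod_erase j hj]
    field_simp [hne j]
  have hterm : ∀ j, (1 - η ^ j * x)⁻¹ = 1 + x * (η ^ j * (1 - η ^ j * x)⁻¹) := by
    intro j
    field_simp [hne j]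
    ring
  calc ∑ j ∈ Finset.range m, (1 - η ^ j * x)⁻¹
      = ∑ j ∈ Finset.range m, (1 + x * (η ^ j * (1 - η ^ j * x)⁻¹)) :=
        Finset.sum_congr rfl fun j _ => hterm j
    _ = m + x * ∑ j ∈ Finset.range m, η ^ j * (1 - η ^ j * x)⁻¹ := by
        rw [Finset.sum_add_distrib, Finset.sum_const, Finset.card_range, ← Finset.mul_sum]
        simp
    _ = m + x * (m * x ^ (m - 1) / (1 - x ^ m)) := by rw [hfdiv]
    _ = m / (1 - x ^ m) := by
        field_simp
        linear_combination (m : ℂ) * hxm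

lemma mainSum (m : ℕ) (hm : 0 < m) (η : ℂ) (hη : IsPrimitiveRoot η m) (x : ℂ) (hx : x ^ m ≠ 1) :
    ∑ j ∈ Finset.range m, η ^ j * x / (1 - η ^ j * x) ^ 2
      = (m : ℂ) ^ 2 * x ^ m / (1 - x ^ m) ^ 2 := by
  have hne : ∀ j, 1 - η ^ j * x ≠ 0 := term_ne m η hη x hx
  have h1xm : 1 - x ^ m ≠ 0 := sub_ne_zero.mpr (Ne.symm hx)
  have hxm : x * x ^ (m - 1) = x ^ m := by
    conv_rhs => rw [show m = (m - 1) + 1 from (Nat.succ_pred_eq_of_pos hm).symm]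
    rw [pow_succ]; ring
  have hU : IsOpen {y : ℂ | y ^ m ≠ 1} := by
    have : {y : ℂ | y ^ m ≠ 1} = (fun y : ℂ => y ^ m) ⁻¹' {(1 : ℂ)}ᶜ := rfl
    rw [this]
    exact (continuous_pow m).isOpen_preimage _ isOpen_compl_singleton
  have Hh : HasDerivAt (fun y : ℂ => ∑ j ∈ Finset.range m, (1 - η ^ j * y)⁻¹)
      (∑ j ∈ Finset.range m, η ^ j / (1 - η ^ j * x) ^ 2) x := by
    refine HasDerivAt.fun_sum fun j _ => ?_
    have h1 : HasDerivAt (fun y : ℂ => 1 - η ^ j * y) (-(η ^ j * 1)) x :=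
      ((hasDerivAt_id x).const_mul (η ^ j)).const_sub 1
    have h2 := h1.inv (hne j)
    exact h2.congr_deriv (by ring)
  have Hr : HasDerivAt (fun y : ℂ => (m : ℂ) * (1 - y ^ m)⁻¹)
      ((m : ℂ) * ((m : ℂ) * x ^ (m - 1) / (1 - x ^ m) ^ 2)) x := by
    have h1 : HasDerivAt (fun y : ℂ => 1 - y ^ m) (-((m : ℂ) * x ^ (m - 1))) x :=
      (hasDerivAt_pow m x).const_sub 1
    have h2 := (h1.inv h1xm).const_mul (m : ℂ)
    exact h2.congr_deriv (by ring)
  have hEq : (fun y : ℂ => (m : ℂ) * (1 - y ^ m)⁻¹)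
      =ᶠ[nhds x] (fun y : ℂ => ∑ j ∈ Finset.range m, (1 - η ^ j * y)⁻¹) := by
    filter_upwards [hU.mem_nhds hx] with y hy
    rw [hId m hm η hη y hy, div_eq_mul_inv]
  have key : ∑ j ∈ Finset.range m, η ^ j / (1 - η ^ j * x) ^ 2
      = (m : ℂ) * ((m : ℂ) * x ^ (m - 1) / (1 - x ^ m) ^ 2) :=
    (Hh.congr_of_eventuallyEq hEq).unique Hr
  calc ∑ j ∈ Finset.range m, η ^ j * x / (1 - η ^ j * x) ^ 2
      = x * ∑ j ∈ Finset.range m, η ^ j / (1 - η ^ j * x) ^ 2 := by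
        rw [Finset.mul_sum]
        exact Finset.sum_congr rfl fun j _ => by ring
    _ = x * ((m : ℂ) * ((m : ℂ) * x ^ (m - 1) / (1 - x ^ m) ^ 2)) := by rw [key]
    _ = (m : ℂ) ^ 2 * x ^ m / (1 - x ^ m) ^ 2 := by
        rw [← hxm]; ring

/-- For a primitive `m`-th root of unity `η` and `x` with `x^m ≠ 1`,
`∑_{j=1}^{m-1} η^{-j}x/(1-η^{-j}x)² = m²x^m/(1-x^m)² - x/(1-x)²`. -/
theorem stmt3 (m : ℕ) (hm : 0 < m) (η : ℂ) (hη : IsPrimitiveRoot η m)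
    (x : ℂ) (hx : x ^ m ≠ 1) (hx1 : x ≠ 1) :
    ∑ j ∈ Finset.Ico 1 m, η ^ (-(j : ℤ)) * x / (1 - η ^ (-(j : ℤ)) * x) ^ 2
      = (m : ℂ) ^ 2 * x ^ m / (1 - x ^ m) ^ 2 - x / (1 - x) ^ 2 := by
  have hpow : ∀ j : ℕ, η ^ (-(j : ℤ)) = (η⁻¹) ^ j := fun j => by
    rw [zpow_neg, zpow_natCast, inv_pow]
  have hins : Finset.range m = insert 0 (Finset.Ico 1 m) := by
    ext k; simp; omega
  have hmain := mainSum m hm η⁻¹ hη.inv x hx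
  rw [hins, Finset.sum_insert (by simp)] at hmain
  simp only [pow_zero, one_mul] at hmain
  simp only [hpow]
  linear_combination hmain
end

section
/- The limit as x → 1 of m² x^m/(1-x^m)² - x/(1-x)² equals -(m²-1)/12. -/
open Filter Complex Asymptotics Topology Finset

/-- Taylor remainder of `exp` to order 5. -/
noncomputable def Efun (w : ℂ) : ℂ := Complex.exp w - ∑ i ∈ Finset.range 5, w ^ i / i.factorial

lemma E_isBigO : Efun =O[nhds (0:ℂ)] fun w : ℂ => w ^ 5 :=
  Complex.exp_sub_sum_range_isBigO_pow 5

lemma key_id (w : ℂ) :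
    w^2 * Complex.exp w - (1 - Complex.exp w)^2 =
      (-1/12*w^4 + w^5/6 + w^6/24) + ((w^2+2) * Efun w - Efun (2*w)) := by
  have h2 : Complex.exp w ^ 2 = Complex.exp (2*w) := by
    rw [two_mul, Complex.exp_add, sq]
  simp only [Efun, Finset.sum_range_succ, Finset.sum_range_zero, Nat.factorial]
  push_cast
  rw [sub_sq, one_pow, mul_one, h2]
  ring

lemma hN : Tendsto (fun w : ℂ => (w^2 * Complex.exp w - (1 - Complex.exp w)^2) / w^4)
    (nhdsWithin 0 {(0:ℂ)}ᶜ) (nhds (-1/12)) := by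
  have hrem : Tendsto (fun w : ℂ => ((w^2+2) * Efun w - Efun (2*w)) / w^4) (nhds 0) (nhds 0) := by
    have h1 : (fun w : ℂ => (w^2+2) * Efun w) =O[nhds 0] fun w : ℂ => w^5 := by
      have hb : (fun w : ℂ => w^2+2) =O[nhds (0:ℂ)] (fun _ => (1:ℂ)) :=
        ((continuous_pow 2).add continuous_const).tendsto 0 |>.isBigO_one ℂ
      simpa using hb.mul E_isBigO
    have h2 : (fun w : ℂ => Efun (2*w)) =O[nhds (0:ℂ)] fun w : ℂ => w^5 := by
      have ht : Tendsto (fun w : ℂ => 2*w) (nhds 0) (nhds 0) := by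
        simpa using (continuous_mul_left (2:ℂ)).tendsto (0:ℂ)
      have := E_isBigO.comp_tendsto ht
      refine this.trans (IsBigO.of_bound 32 ?_)
      filter_upwards with w
      simp [norm_pow, norm_mul, mul_pow]
      ring_nf
      nlinarith [norm_nonneg w, pow_nonneg (norm_nonneg w) 5]
    have hnum := h1.sub h2
    have hdiv : (fun w : ℂ => ((w^2+2) * Efun w - Efun (2*w)) / w^4) =O[nhds (0:ℂ)]
        fun w : ℂ => w := by
      have := hnum.mul (isBigO_refl (fun w : ℂ => (w^4)⁻¹) (nhds 0))
      have heq : (fun w : ℂ => w^5 * (w^4)⁻¹) = fun w : ℂ => w := by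
        funext w
        by_cases hw : w = 0
        · simp [hw]
        · field_simp
      rw [heq] at this
      simpa [div_eq_mul_inv] using this
    exact hdiv.trans_tendsto (continuous_id.tendsto (0:ℂ))
  have hpoly : Tendsto (fun w : ℂ => -1/12 + w/6 + w^2/24) (nhds (0:ℂ)) (nhds (-1/12)) := by
    have hc : Continuous fun w : ℂ => -1/12 + w/6 + w^2/24 := by continuity
    simpa using hc.tendsto 0
  have hsum : Tendsto (fun w : ℂ =>
      (-1/12 + w/6 + w^2/24) + ((w^2+2)*Efun w - Efun (2*w))/w^4) (nhds (0:ℂ)) (nhds (-1/12)) := by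
    simpa using hpoly.add hrem
  refine Tendsto.congr' ?_ (hsum.mono_left nhdsWithin_le_nhds)
  filter_upwards [self_mem_nhdsWithin] with w hw
  have hw0 : w ≠ 0 := hw
  rw [key_id]
  field_simp

lemma exp_ne_one_of_small {w : ℂ} (hw : w ≠ 0) (h : ‖w‖ < 1) : Complex.exp w ≠ 1 := by
  intro h1
  rcases Complex.exp_eq_one_iff.1 h1 with ⟨n, rfl⟩
  have hn : n ≠ 0 := by rintro rfl; simp at hw
  have hnorm : ‖((n : ℂ) * (2 * Real.pi * Complex.I))‖ = |(n : ℝ)| * (2 * Real.pi) := by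
    simp [norm_mul, abs_of_pos Real.pi_pos]
  have h1n : (1:ℝ) ≤ |(n:ℝ)| := by
    rw [← Int.cast_abs]; exact_mod_cast Int.one_le_abs hn
  have : (1:ℝ) ≤ ‖((n : ℂ) * (2 * Real.pi * Complex.I))‖ := by
    rw [hnorm]; nlinarith [Real.pi_gt_three]
  linarith

lemma hcore : Tendsto (fun w : ℂ => Complex.exp w / (1 - Complex.exp w)^2 - 1/w^2)
    (nhdsWithin 0 {(0:ℂ)}ᶜ) (nhds (-1/12)) := by
  have hB : Tendsto (fun w : ℂ => ((Complex.exp w - 1)/w)^2) (nhdsWithin 0 {(0:ℂ)}ᶜ) (nhds 1) := by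
    have hd : HasDerivAt Complex.exp 1 0 := by simpa using Complex.hasDerivAt_exp 0
    have hs := hasDerivAt_iff_tendsto_slope.1 hd
    have ht : Tendsto (fun w : ℂ => (Complex.exp w - 1)/w) (nhdsWithin 0 {(0:ℂ)}ᶜ) (nhds 1) := by
      refine hs.congr fun w => ?_
      simp [slope_def_field]
    simpa using ht.pow 2
  have hdiv := hN.div hB one_ne_zero
  rw [div_one] at hdiv
  refine Tendsto.congr' ?_ hdiv
  have hball : Metric.ball (0:ℂ) 1 ∈ nhdsWithin (0:ℂ) {(0:ℂ)}ᶜ :=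
    nhdsWithin_le_nhds (Metric.ball_mem_nhds _ one_pos)
  filter_upwards [self_mem_nhdsWithin, hball] with w hw hb
  have hw0 : w ≠ 0 := hw
  have hwn : ‖w‖ < 1 := by simpa using hb
  have he : Complex.exp w ≠ 1 := exp_ne_one_of_small hw0 hwn
  have h1 : (1 : ℂ) - Complex.exp w ≠ 0 := sub_ne_zero.2 fun h => he h.symm
  have h1' : Complex.exp w - 1 ≠ 0 := sub_ne_zero.2 he
  simp only [Pi.div_apply]
  field_simp
  ring

/-- The limit as `x → 1` (along `x` with `x^m ≠ 1`) of
`m² x^m/(1-x^m)² - x/(1-x)²` is `-(m²-1)/12`. -/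
theorem stmt4 (m : ℕ) (hm : 0 < m) :
    Filter.Tendsto
      (fun x : ℂ => (m : ℂ) ^ 2 * x ^ m / (1 - x ^ m) ^ 2 - x / (1 - x) ^ 2)
      (nhdsWithin 1 {x : ℂ | x ^ m ≠ 1})
      (nhds (-((m : ℂ) ^ 2 - 1) / 12)) := by
  have hm0 : (m:ℂ) ≠ 0 := Nat.cast_ne_zero.2 hm.ne'
  have hlog : Tendsto Complex.log (nhdsWithin 1 {x : ℂ | x ^ m ≠ 1})
      (nhdsWithin 0 {(0:ℂ)}ᶜ) := by
    rw [tendsto_nhdsWithin_iff]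
    constructor
    · have hc : ContinuousAt Complex.log 1 := continuousAt_clog (by simp)
      simpa [Complex.log_one] using (hc.tendsto.mono_left nhdsWithin_le_nhds)
    · have hball : Metric.ball (1:ℂ) 1 ∈ nhdsWithin (1:ℂ) {x : ℂ | x ^ m ≠ 1} :=
        nhdsWithin_le_nhds (Metric.ball_mem_nhds _ one_pos)
      filter_upwards [self_mem_nhdsWithin, hball] with x hx hb
      intro h0
      have hx0 : x ≠ 0 := by
        rintro rfl
        simp [Metric.mem_ball, dist_eq_norm] at hb
      have hx1 : x = 1 := by
        have := Complex.exp_log hx0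
        rw [h0, Complex.exp_zero] at this
        exact this.symm
      exact hx (by simp [hx1])
  have hg : Tendsto (fun z : ℂ => (m:ℂ)^2 *
        (Complex.exp ((m:ℂ)*z) / (1 - Complex.exp ((m:ℂ)*z))^2) -
        Complex.exp z/(1-Complex.exp z)^2)
      (nhdsWithin 0 {(0:ℂ)}ᶜ) (nhds (-((m:ℂ)^2-1)/12)) := by
    have hmz : Tendsto (fun z : ℂ => (m:ℂ)*z) (nhdsWithin 0 {(0:ℂ)}ᶜ)
        (nhdsWithin 0 {(0:ℂ)}ᶜ) := by
      rw [tendsto_nhdsWithin_iff]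
      constructor
      · simpa using ((continuous_mul_left (m:ℂ)).tendsto (0:ℂ)).mono_left
          nhdsWithin_le_nhds
      · filter_upwards [self_mem_nhdsWithin] with z hz
        exact mul_ne_zero hm0 hz
    have h1 := hcore.comp hmz
    have h2 := (h1.const_mul ((m:ℂ)^2)).sub hcore
    have hval : (m:ℂ)^2 * (-1/12) - (-1/12) = -((m:ℂ)^2-1)/12 := by ring
    rw [hval] at h2
    refine Tendsto.congr' ?_ h2
    filter_upwards [self_mem_nhdsWithin] with z hz
    have hz0 : z ≠ 0 := hz
    simp only [Function.comp]
    field_simp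
    ring
  have hcomp := hg.comp hlog
  refine Tendsto.congr' ?_ hcomp
  have hball : Metric.ball (1:ℂ) 1 ∈ nhdsWithin (1:ℂ) {x : ℂ | x ^ m ≠ 1} :=
    nhdsWithin_le_nhds (Metric.ball_mem_nhds _ one_pos)
  filter_upwards [hball] with x hb
  have hx0 : x ≠ 0 := by
    rintro rfl
    simp [Metric.mem_ball, dist_eq_norm] at hb
  have hexp : Complex.exp (Complex.log x) = x := Complex.exp_log hx0
  have hexpm : Complex.exp ((m:ℂ) * Complex.log x) = x ^ m := by
    rw [Complex.exp_nat_mul, hexp]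
  simp only [Function.comp, hexp, hexpm]
  ring
end

section
/- With L = K^k, ν the cyclic shift, and αᵢ, βᵢ ∈ K for i = 1,…,k-1, set α = (α₁,…,α_{k-1}, -∑αᵢ) and β = (β₁,…,β_{k-1}, -∑βᵢ) in L. Then ∑_{j=0}^{k-1} j ⟨ν^j α, β⟩ = -k ∑_{n=1}^{k-1} ∑_{j=1}^{n} ⟨α_n, β_j⟩; in particular it is divisible by k. -/
private lemma Bsum_right {K : Type*} {ι : Type*} [AddCommGroup K] (B : K → K → ℤ)
    (hadd : ∀ a b c, B a (b + c) = B a b + B a c) (x : K)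
    (s : Finset ι) (f : ι → K) : B x (∑ i ∈ s, f i) = ∑ i ∈ s, B x (f i) := by
  classical
  have h0 : B x 0 = 0 := by have := hadd x 0 0; simp only [add_zero] at this; omega
  induction s using Finset.induction with
  | empty => simpa
  | insert _ _ h ih => rw [Finset.sum_insert h, Finset.sum_insert h, hadd, ih]

private lemma Bneg_right {K : Type*} [AddCommGroup K] (B : K → K → ℤ)
    (hadd : ∀ a b c, B a (b + c) = B a b + B a c) (x y : K) :
    B x (-y) = -B x y := by
  have h0 : B x 0 = 0 := by have := hadd x 0 0; simp only [add_zero] at this; omega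
  have := hadd x y (-y); rw [add_neg_cancel, h0] at this; omega

/-- For `α = (α₁,…,α_{k-1},-∑αᵢ)` and `β = (β₁,…,β_{k-1},-∑βᵢ)` in `L = K^k` with `ν` the
cyclic shift, `∑_{j=0}^{k-1} j⟨ν^j α, β⟩ = -k ∑_{n=1}^{k-1} ∑_{j=1}^{n} ⟨α_n, β_j⟩`. -/
theorem stmt9 (K : Type*) [AddCommGroup K] (B : K → K → ℤ)
    (hsym : ∀ a b, B a b = B b a)
    (hadd₁ : ∀ a b c, B (a + b) c = B a c + B b c)
    (hadd₂ : ∀ a b c, B a (b + c) = B a b + B a c)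
    (k : ℕ) (hk : 0 < k) [NeZero k]
    (BL : (Fin k → K) → (Fin k → K) → ℤ)
    (hBL : ∀ v w, BL v w = ∑ i, B (v i) (w i))
    (shift : (Fin k → K) → (Fin k → K))
    (hshift : ∀ v i, shift v i = v (i + 1))
    (a b : Fin (k - 1) → K)
    (α β : Fin k → K)
    (hα : α = fun i : Fin k => if h : (i : ℕ) < k - 1 then a ⟨i, h⟩ else -∑ j, a j)
    (hβ : β = fun i : Fin k => if h : (i : ℕ) < k - 1 then b ⟨i, h⟩ else -∑ j, b j) :
    ∑ j ∈ Finset.range k, (j : ℤ) * BL (shift^[j] α) β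
      = -(k : ℤ) * ∑ n : Fin (k - 1), ∑ j : Fin (k - 1),
          if (j : ℕ) ≤ (n : ℕ) then B (a n) (b j) else 0 := by
  have hB0 : ∀ x : K, B x 0 = 0 := by
    intro x; have := hadd₂ x 0 0; simp only [add_zero] at this; omega
  have hB0' : ∀ x : K, B 0 x = 0 := by
    intro x; rw [hsym]; exact hB0 x
  -- iterate formula
  open Fin.NatCast in
  have hiter : ∀ (j : ℕ) (v : Fin k → K) (i : Fin k), shift^[j] v i = v (i + (j : Fin k)) := by
    intro j
    induction j with
    | zero => intro v i; simp
    | succ n ih =>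
      intro v i
      rw [Function.iterate_succ_apply, ih, hshift]
      congr 1
      push_cast
      abel
  obtain ⟨k', rfl⟩ : ∃ k', k = k' + 1 := ⟨k - 1, by omega⟩
  open Fin.NatCast in
  have goal' : ∀ (a b : Fin k' → K) (α β : Fin (k'+1) → K),
      (α = fun i : Fin (k'+1) => if h : (i : ℕ) < k' then a ⟨i, h⟩ else -∑ j, a j) →
      (β = fun i : Fin (k'+1) => if h : (i : ℕ) < k' then b ⟨i, h⟩ else -∑ j, b j) →
      ∑ j ∈ Finset.range (k'+1), (j : ℤ) * BL (shift^[j] α) β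
        = -((k'+1 : ℕ) : ℤ) * ∑ n : Fin k', ∑ j : Fin k',
            if (j : ℕ) ≤ (n : ℕ) then B (a n) (b j) else 0 := by
    clear hα hβ α β a b
    intro a b α β hα hβ
    -- values of α and β
    have hαc : ∀ n : Fin k', α n.castSucc = a n := by
      intro n
      rw [hα]
      simp only [Fin.coe_castSucc]
      rw [dif_pos n.isLt, Fin.eta]
    have hαl : α (Fin.last k') = -∑ j, a j := by
      rw [hα]; simp
    have hβc : ∀ n : Fin k', β n.castSucc = b n := by
      intro n
      rw [hβ]
      simp only [Fin.coe_castSucc]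
      rw [dif_pos n.isLt, Fin.eta]
    have hβl : β (Fin.last k') = -∑ j, b j := by
      rw [hβ]; simp
    have hα0 : ∑ m, α m = 0 := by
      rw [Fin.sum_univ_castSucc]
      simp only [hαc, hαl]
      simp
    have hβ0 : ∑ m, β m = 0 := by
      rw [Fin.sum_univ_castSucc]
      simp only [hβc, hβl]
      simp
    -- reindexing the sum
    have step2 : (∑ j ∈ Finset.range (k'+1), (j:ℤ) * BL (shift^[j] α) β)
        = ∑ i : Fin (k'+1), ∑ m : Fin (k'+1), (((m - i : Fin (k'+1)) : ℕ) : ℤ) * B (α m) (β i) := by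
      have h1 : ∀ j ∈ Finset.range (k'+1), (j:ℤ) * BL (shift^[j] α) β
          = ∑ i : Fin (k'+1), (j:ℤ) * B (α (i + (j : Fin (k'+1)))) (β i) := by
        intro j _
        rw [hBL, Finset.mul_sum]
        refine Finset.sum_congr rfl fun i _ => ?_
        rw [hiter]
      rw [Finset.sum_congr rfl h1, Finset.sum_comm]
      refine Finset.sum_congr rfl fun i _ => ?_
      rw [← Fin.sum_univ_eq_sum_range (fun j : ℕ => (j:ℤ) * B (α (i + (j : Fin (k'+1)))) (β i))]
      refine Fintype.sum_equiv (Equiv.addLeft i) _ _ fun j => ?_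
      simp only [Equiv.coe_addLeft, Fin.cast_val_eq_self, add_sub_cancel_left]
    -- the cyclic distance
    have hc : ∀ m i : Fin (k'+1), (((m - i : Fin (k'+1)) : ℕ) : ℤ)
        = ((m:ℕ):ℤ) - ((i:ℕ):ℤ) + (if (m:ℕ) < (i:ℕ) then ((k'+1:ℕ):ℤ) else 0) := by
      intro m i
      have hv : ((m - i : Fin (k'+1)) : ℕ) = ((m:ℕ) + ((k'+1) - (i:ℕ))) % (k'+1) := by
        simp [Fin.sub_def]
        rw [Nat.add_comm]
      have hm := m.isLt
      have hi := i.isLt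
      rcases Nat.lt_or_ge (m:ℕ) (i:ℕ) with h | h
      · rw [hv, Nat.mod_eq_of_lt (by omega), if_pos h]
        omega
      · have h2 : ((m:ℕ) + ((k'+1) - (i:ℕ))) = ((m:ℕ) - (i:ℕ)) + (k'+1) := by omega
        rw [hv, h2, Nat.add_mod_right, Nat.mod_eq_of_lt (by omega),
          if_neg (Nat.not_lt.mpr h)]
        omega
    -- B sums against α and β vanish
    have hsumBα : ∀ x : K, ∑ m : Fin (k'+1), B (α m) x = 0 := by
      intro x
      have e : ∑ m : Fin (k'+1), B (α m) x = B x (∑ m, α m) := by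
        rw [Bsum_right B hadd₂ x]
        exact Finset.sum_congr rfl fun m _ => hsym (α m) x
      rw [e, hα0, hB0]
    have hsumBβ : ∀ x : K, ∑ i : Fin (k'+1), B x (β i) = 0 := by
      intro x
      rw [← Bsum_right B hadd₂ x, hβ0, hB0]
    -- the linear part vanishes
    have hA : ∑ i : Fin (k'+1), ∑ m : Fin (k'+1),
        (((m:ℕ):ℤ) - ((i:ℕ):ℤ)) * B (α m) (β i) = 0 := by
      have h1 : ∀ i : Fin (k'+1), ∑ m : Fin (k'+1), (((m:ℕ):ℤ) - ((i:ℕ):ℤ)) * B (α m) (β i)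
          = (∑ m : Fin (k'+1), ((m:ℕ):ℤ) * B (α m) (β i))
            - ((i:ℕ):ℤ) * ∑ m : Fin (k'+1), B (α m) (β i) := by
        intro i
        rw [Finset.mul_sum, ← Finset.sum_sub_distrib]
        exact Finset.sum_congr rfl fun m _ => by ring
      simp only [h1, hsumBα, mul_zero, sub_zero]
      rw [Finset.sum_comm]
      refine Finset.sum_eq_zero fun m _ => ?_
      rw [← Finset.mul_sum, hsumBβ, mul_zero]
    -- identifying the combinatorial part
    have hT : (∑ i : Fin (k'+1), ∑ m : Fin (k'+1),
          if (m:ℕ) < (i:ℕ) then B (α m) (β i) else 0)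
        = -∑ n : Fin k', ∑ j : Fin k', if (j:ℕ) ≤ (n:ℕ) then B (a n) (b j) else 0 := by
      have inner : ∀ i : Fin (k'+1), (∑ m : Fin (k'+1),
            if (m:ℕ) < (i:ℕ) then B (α m) (β i) else 0)
          = (∑ m' : Fin k', if (m':ℕ) < (i:ℕ) then B (a m') (β i) else 0)
            + (if k' < (i:ℕ) then B (α (Fin.last k')) (β i) else 0) := by
        intro i
        rw [Fin.sum_univ_castSucc]
        congr 1
        refine Finset.sum_congr rfl fun m' _ => ?_
        rw [Fin.coe_castSucc, hαc]
      rw [Finset.sum_congr rfl fun i _ => inner i, Fin.sum_univ_castSucc]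
      have hlast : (∑ m' : Fin k', if (m':ℕ) < ((Fin.last k' : Fin (k'+1)):ℕ)
              then B (a m') (β (Fin.last k')) else 0)
            + (if k' < ((Fin.last k' : Fin (k'+1)):ℕ) then B (α (Fin.last k')) (β (Fin.last k')) else 0)
          = -∑ m' : Fin k', ∑ j : Fin k', B (a m') (b j) := by
        rw [Fin.val_last, if_neg (lt_irrefl k'), add_zero, ← Finset.sum_neg_distrib]
        refine Finset.sum_congr rfl fun m' _ => ?_
        rw [if_pos m'.isLt, hβl, Bneg_right B hadd₂, Bsum_right B hadd₂]
      rw [hlast]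
      have hcs : ∀ i' : Fin k', ((∑ m' : Fin k', if (m':ℕ) < ((i'.castSucc : Fin (k'+1)):ℕ)
              then B (a m') (β i'.castSucc) else 0)
            + (if k' < ((i'.castSucc : Fin (k'+1)):ℕ) then B (α (Fin.last k')) (β i'.castSucc) else 0))
          = ∑ m' : Fin k', if (m':ℕ) < (i':ℕ) then B (a m') (b i') else 0 := by
        intro i'
        rw [Fin.coe_castSucc, if_neg (by omega : ¬ k' < (i':ℕ)), add_zero]
        refine Finset.sum_congr rfl fun m' _ => ?_
        rw [hβc]
      rw [Finset.sum_congr rfl fun i' _ => hcs i', Finset.sum_comm,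
        ← Finset.sum_neg_distrib, ← Finset.sum_add_distrib, ← Finset.sum_neg_distrib]
      refine Finset.sum_congr rfl fun n _ => ?_
      rw [← Finset.sum_neg_distrib, ← Finset.sum_add_distrib, ← Finset.sum_neg_distrib]
      refine Finset.sum_congr rfl fun j _ => ?_
      rcases Nat.lt_or_ge (n:ℕ) (j:ℕ) with h | h
      · rw [if_pos h, if_neg (by omega)]
        ring
      · rw [if_neg (by omega), if_pos h]
        ring
    -- assembly
    rw [step2]
    have split : (∑ i : Fin (k'+1), ∑ m : Fin (k'+1),
          (((m - i : Fin (k'+1)) : ℕ) : ℤ) * B (α m) (β i))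
        = (∑ i : Fin (k'+1), ∑ m : Fin (k'+1), (((m:ℕ):ℤ) - ((i:ℕ):ℤ)) * B (α m) (β i))
          + ((k'+1 : ℕ) : ℤ) * ∑ i : Fin (k'+1), ∑ m : Fin (k'+1),
              (if (m:ℕ) < (i:ℕ) then B (α m) (β i) else 0) := by
      rw [Finset.mul_sum, ← Finset.sum_add_distrib]
      refine Finset.sum_congr rfl fun i _ => ?_
      rw [Finset.mul_sum, ← Finset.sum_add_distrib]
      refine Finset.sum_congr rfl fun m _ => ?_
      rw [hc]
      split_ifs with h <;> ring
    rw [split, hA, zero_add, hT]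
    push_cast
    ring
  exact goal' a b α β hα hβ
end

section
/- For a k-th root of unity η and a primitive such root, the commutator function C(α,β) = ∏_{j=0}^{k-1} (-η^j)^{⟨ν^j α, β⟩} on L = K^k satisfies C(α,β) = 1 whenever α, β ∈ N = {(α₁,…,α_{k-1}, -∑αᵢ)}. That is, the restriction of C to N × N is trivial. -/
/-- The commutator map `C(α,β) = ∏_{j=0}^{k-1} (-η^j)^{⟨ν^j α, β⟩}` on `L = K^k` is trivial on
`N × N`, where `N` consists of those `γ ∈ L` orthogonal to all diagonal vectors. -/
theorem stmt10 (K : Type*) [AddCommGroup K] (B : K → K → ℤ)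
    (hsym : ∀ a b, B a b = B b a)
    (hadd₁ : ∀ a b c, B (a + b) c = B a c + B b c)
    (hadd₂ : ∀ a b c, B a (b + c) = B a b + B a c)
    (heven : ∀ a, Even (B a a))
    (hnd : ∀ a, (∀ c, B a c = 0) → a = 0)
    (k : ℕ) (hk : 0 < k) [NeZero k]
    (η : ℂ) (hη : IsPrimitiveRoot η k)
    (BL : (Fin k → K) → (Fin k → K) → ℤ)
    (hBL : ∀ v w, BL v w = ∑ i, B (v i) (w i))
    (shift : (Fin k → K) → (Fin k → K))
    (hshift : ∀ v i, shift v i = v (i + 1))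
    (α β : Fin k → K)
    (hαN : ∀ c : K, BL α (fun _ => c) = 0)
    (hβN : ∀ c : K, BL β (fun _ => c) = 0) :
    ∏ j ∈ Finset.range k, (-η ^ j) ^ (BL (shift^[j] α) β) = 1 := by
  classical
  have hB0l : ∀ c, B 0 c = 0 := by
    intro c; have h := hadd₁ 0 0 c; rw [add_zero] at h; omega
  have hB0r : ∀ a, B a 0 = 0 := by
    intro a; have h := hadd₂ a 0 0; rw [add_zero] at h; omega
  have hsuml : ∀ (v : Fin k → K) (c : K), (∑ i, B (v i) c) = B (∑ i, v i) c := by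
    intro v c
    exact (map_sum (AddMonoidHom.mk' (fun b => B b c) (fun a b => hadd₁ a b c)) v
      Finset.univ).symm
  have hsumr : ∀ (a : K) (w : Fin k → K), (∑ i, B a (w i)) = B a (∑ i, w i) := by
    intro a w
    exact (map_sum (AddMonoidHom.mk' (fun b => B a b) (fun x y => hadd₂ a x y)) w
      Finset.univ).symm
  have hsα : (∑ i, α i) = 0 := by
    apply hnd; intro c
    have h := hαN c; rw [hBL] at h
    rw [← hsuml]; exact h
  have hsβ : (∑ i, β i) = 0 := by
    apply hnd; intro c
    have h := hβN c; rw [hBL] at h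
    rw [← hsuml]; exact h
  have hη0 : η ≠ 0 := hη.ne_zero (NeZero.ne k)
  -- iterates of the shift
  open Fin.NatCast in
  have hiter : ∀ (j : ℕ) (i : Fin k), shift^[j] α i = α (i + (j : Fin k)) := by
    intro j; induction j with
    | zero => intro i; simp
    | succ n ih =>
      intro i
      rw [Function.iterate_succ_apply', hshift, ih]
      congr 1
      push_cast
      abel
  open Fin.NatCast in
  set e : ℕ → ℤ := fun j => ∑ i, B (α (i + (j : Fin k))) (β i) with he
  have hBLe : ∀ j, BL (shift^[j] α) β = e j := by
    intro j; rw [hBL]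
    exact Finset.sum_congr rfl (fun i _ => by rw [hiter])
  -- row/column sums vanish
  have hrow : ∀ l : Fin k, (∑ i, B (α l) (β i)) = 0 := by
    intro l; rw [hsumr, hsβ, hB0r]
  have hcol : ∀ i : Fin k, (∑ l, B (α l) (β i)) = 0 := by
    intro i; rw [hsuml, hsα, hB0l]
  -- the sum of exponents vanishes
  have hS1 : (∑ j ∈ Finset.range k, e j) = 0 := by
    rw [← Fin.sum_univ_eq_sum_range e k]
    have h1 : ∀ j : Fin k, e j.val = ∑ i, B (α (i + j)) (β i) := by
      intro j; simp only [he, Fin.cast_val_eq_self]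
    calc (∑ j : Fin k, e j.val) = ∑ j : Fin k, ∑ i, B (α (i + j)) (β i) := by
          exact Finset.sum_congr rfl (fun j _ => h1 j)
      _ = ∑ i : Fin k, ∑ j : Fin k, B (α (i + j)) (β i) := Finset.sum_comm
      _ = ∑ i : Fin k, ∑ l : Fin k, B (α l) (β i) := by
          refine Finset.sum_congr rfl (fun i _ => ?_)
          exact Fintype.sum_equiv (Equiv.addLeft i) _ _ (fun j => rfl)
      _ = 0 := by simp [hcol]
  -- the weighted sum is divisible by k
  have key : ∀ a b : Fin k, (((a - b : Fin k).val : ℕ) : ZMod k) =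
      (a.val : ZMod k) - (b.val : ZMod k) := by
    intro a b
    have hv : (a - b).val = (k - b.val + a.val) % k := by rw [Fin.sub_def]
    rw [hv, ZMod.natCast_mod, Nat.cast_add, Nat.cast_sub b.isLt.le, ZMod.natCast_self]
    ring
  have hS2 : (k : ℤ) ∣ ∑ j ∈ Finset.range k, (j : ℤ) * e j := by
    rw [← ZMod.intCast_zmod_eq_zero_iff_dvd]
    have h0 : (∑ j ∈ Finset.range k, (j : ℤ) * e j) =
        ∑ j : Fin k, ∑ i : Fin k, (j.val : ℤ) * B (α (i + j)) (β i) := by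
      rw [← Fin.sum_univ_eq_sum_range (fun j => (j : ℤ) * e j) k]
      refine Finset.sum_congr rfl (fun j _ => ?_)
      simp only [he, Fin.cast_val_eq_self, Finset.mul_sum]
    rw [h0]
    push_cast
    have h2 : (∑ j : Fin k, ∑ i : Fin k,
        ((j.val : ZMod k)) * ((B (α (i + j)) (β i) : ℤ) : ZMod k)) =
        ∑ i : Fin k, ∑ l : Fin k,
          (((l.val : ZMod k)) - ((i.val : ZMod k))) * ((B (α l) (β i) : ℤ) : ZMod k) := by
      rw [Finset.sum_comm]
      refine Finset.sum_congr rfl (fun i _ => ?_)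
      refine (Fintype.sum_equiv (Equiv.subRight i)
        (fun l => (((l.val : ZMod k)) - ((i.val : ZMod k))) * ((B (α l) (β i) : ℤ) : ZMod k))
        (fun j => ((j.val : ZMod k)) * ((B (α (i + j)) (β i) : ℤ) : ZMod k)) (fun l => ?_)).symm
      have h3 : i + (l - i) = l := by abel
      show ((l.val : ZMod k) - (i.val : ZMod k)) * ((B (α l) (β i) : ℤ) : ZMod k) =
        (((l - i : Fin k).val : ZMod k)) * ((B (α (i + (l - i))) (β i) : ℤ) : ZMod k)
      rw [h3, key]
    rw [h2]
    have h4 : ∀ i l : Fin k,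
        (((l.val : ZMod k)) - ((i.val : ZMod k))) * ((B (α l) (β i) : ℤ) : ZMod k) =
        (l.val : ZMod k) * ((B (α l) (β i) : ℤ) : ZMod k)
          - (i.val : ZMod k) * ((B (α l) (β i) : ℤ) : ZMod k) := fun i l => by ring
    calc (∑ i : Fin k, ∑ l : Fin k,
          (((l.val : ZMod k)) - ((i.val : ZMod k))) * ((B (α l) (β i) : ℤ) : ZMod k))
        = (∑ i : Fin k, ∑ l : Fin k, (l.val : ZMod k) * ((B (α l) (β i) : ℤ) : ZMod k))
          - ∑ i : Fin k, ∑ l : Fin k, (i.val : ZMod k) * ((B (α l) (β i) : ℤ) : ZMod k) := by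
          simp only [h4, Finset.sum_sub_distrib]
      _ = 0 - 0 := by
          congr 1
          · rw [Finset.sum_comm]
            refine Finset.sum_eq_zero (fun l _ => ?_)
            rw [← Finset.mul_sum]
            have : (∑ i : Fin k, ((B (α l) (β i) : ℤ) : ZMod k)) = 0 := by
              rw [← Int.cast_sum, hrow l]; simp
            rw [this, mul_zero]
          · refine Finset.sum_eq_zero (fun i _ => ?_)
            rw [← Finset.mul_sum]
            have : (∑ l : Fin k, ((B (α l) (β i) : ℤ) : ZMod k)) = 0 := by
              rw [← Int.cast_sum, hcol i]; simp
            rw [this, mul_zero]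
      _ = 0 := by ring
  -- zpow over sums
  have hzs : ∀ (x : ℂ), x ≠ 0 → ∀ (f : ℕ → ℤ) (s : Finset ℕ),
      (∏ j ∈ s, x ^ f j) = x ^ (∑ j ∈ s, f j) := by
    intro x hx f s
    induction s using Finset.induction_on with
    | empty => simp
    | insert _ _ h ih => rw [Finset.prod_insert h, Finset.sum_insert h, ih, zpow_add₀ hx]
  calc (∏ j ∈ Finset.range k, (-η ^ j) ^ (BL (shift^[j] α) β))
      = ∏ j ∈ Finset.range k, ((-1 : ℂ) ^ (e j) * η ^ ((j : ℤ) * e j)) := by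
        refine Finset.prod_congr rfl (fun j _ => ?_)
        rw [hBLe, show (-η ^ j : ℂ) = (-1) * η ^ j by ring, mul_zpow,
          ← zpow_natCast η j, ← zpow_mul]
    _ = (∏ j ∈ Finset.range k, (-1 : ℂ) ^ (e j)) *
        ∏ j ∈ Finset.range k, η ^ ((j : ℤ) * e j) := Finset.prod_mul_distrib
    _ = (-1 : ℂ) ^ (∑ j ∈ Finset.range k, e j) *
        η ^ (∑ j ∈ Finset.range k, (j : ℤ) * e j) := by
        rw [hzs (-1 : ℂ) (by norm_num) e, hzs η hη0]
    _ = 1 := by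
        obtain ⟨t, ht⟩ := hS2
        rw [hS1, ht, zpow_mul, zpow_natCast, hη.pow_eq_one]
        simp
end

section
/- The coefficient c_{110} of xy in -½ ∑_{j=1}^{k-1} log(((1+x)^{1/k} - η^{-j}(1+y)^{1/k})/(1-η^{-j})) equals -(1/(2k²)) ∑_{j=1}^{k-1} η^{-j}/(1-η^{-j})². -/
open Complex Filter

/-- The coefficient `c₁₁₀` of `xy` (equivalently, the mixed partial `∂²/∂x∂y` at `x = y = 0`)
of `-½ ∑_{j=1}^{k-1} log(((1+x)^{1/k} - η^{-j}(1+y)^{1/k})/(1-η^{-j}))` equals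
`-(1/(2k²)) ∑_{j=1}^{k-1} η^{-j}/(1-η^{-j})²`. -/
theorem stmt17 (k : ℕ) (hk : 0 < k) (η : ℂ) (hη : IsPrimitiveRoot η k)
    (F : ℂ → ℂ → ℂ)
    (hF : ∀ x y, F x y = -(1 / 2) * ∑ j ∈ Finset.Ico 1 k,
        Complex.log (((1 + x) ^ ((k : ℂ)⁻¹) - η ^ (-(j : ℤ)) * (1 + y) ^ ((k : ℂ)⁻¹))
          / (1 - η ^ (-(j : ℤ))))) :
    deriv (fun x => deriv (fun y => F x y) 0) 0
      = -(1 / (2 * (k : ℂ) ^ 2)) *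
          ∑ j ∈ Finset.Ico 1 k, η ^ (-(j : ℤ)) / (1 - η ^ (-(j : ℤ))) ^ 2 := by
  set c : ℂ := (k : ℂ)⁻¹ with hc
  have hk0 : (k : ℂ) ≠ 0 := Nat.cast_ne_zero.mpr hk.ne'
  have hη0 : η ≠ 0 := hη.ne_zero hk.ne'
  set a : ℕ → ℂ := fun j => η ^ (-(j : ℤ)) with ha
  have ha1 : ∀ j ∈ Finset.Ico 1 k, (1 : ℂ) - a j ≠ 0 := by
    intro j hj
    rw [Finset.mem_Ico] at hj
    refine sub_ne_zero_of_ne (Ne.symm ?_)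
    intro h
    have hpow : η ^ j = 1 := by
      have : (η ^ j)⁻¹ = 1 := by
        rw [← h]; simp [ha, zpow_neg]
      simpa [inv_eq_one] using this
    have hdvd := (hη.pow_eq_one_iff_dvd j).mp hpow
    exact absurd (Nat.le_of_dvd (by omega) hdvd) (by omega)
  -- the inner derivative, for x near 0
  have key : (fun x => deriv (fun y => F x y) 0) =ᶠ[nhds (0:ℂ)]
      fun x => -(1/2) * ∑ j ∈ Finset.Ico 1 k,
        (-(a j * c) / ((1 + x) ^ c - a j)) := by
    have hev : ∀ᶠ x in nhds (0:ℂ), ∀ j ∈ (↑(Finset.Ico 1 k) : Set ℕ),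
        ((1 + x) ^ c - a j) / (1 - a j) ∈ Complex.slitPlane := by
      rw [eventually_all_finite (Finset.Ico 1 k).finite_toSet]
      intro j hj
      rw [Finset.mem_coe] at hj
      have hcont : ContinuousAt (fun x : ℂ => ((1 + x) ^ c - a j) / (1 - a j)) 0 := by
        have hf : ContinuousAt (fun x : ℂ => 1 + x) 0 := by fun_prop
        have hg : ContinuousAt (fun z : ℂ => z ^ c) (1 + 0 : ℂ) :=
          continuousAt_cpow_const (by simpa using Complex.one_mem_slitPlane)
        have h1 : ContinuousAt (fun x : ℂ => (1 + x) ^ c) 0 := hg.comp hf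
        exact (h1.sub continuousAt_const).div_const _
      have hval : ((1 + (0:ℂ)) ^ c - a j) / (1 - a j) ∈ Complex.slitPlane := by
        simp only [add_zero, Complex.one_cpow]
        rw [div_self (ha1 j hj)]
        exact Complex.one_mem_slitPlane
      exact hcont.eventually_mem (Complex.isOpen_slitPlane.mem_nhds hval)
    filter_upwards [hev] with x hx
    have hder : HasDerivAt (fun y => F x y)
        (-(1/2) * ∑ j ∈ Finset.Ico 1 k, (-(a j * c) / ((1 + x) ^ c - a j))) 0 := by
      have : HasDerivAt (fun y : ℂ => -(1/2) * ∑ j ∈ Finset.Ico 1 k,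
          Complex.log (((1 + x) ^ c - a j * (1 + y) ^ c) / (1 - a j)))
          (-(1/2) * ∑ j ∈ Finset.Ico 1 k, (-(a j * c) / ((1 + x) ^ c - a j))) 0 := by
        refine HasDerivAt.const_mul _ (HasDerivAt.fun_sum ?_)
        intro j hj
        have hj' := hx j (Finset.mem_coe.mpr hj)
        have hne : (1 + x) ^ c - a j ≠ 0 := by
          intro h
          apply Complex.slitPlane_ne_zero hj'
          rw [h, zero_div]
        have h1 : HasDerivAt (fun y : ℂ => 1 + y) 1 0 := by
          simpa using (hasDerivAt_id (0:ℂ)).const_add 1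
        have h2 : HasDerivAt (fun y : ℂ => (1 + y) ^ c) c 0 := by
          have := h1.cpow_const (c := c) (by simpa using Complex.one_mem_slitPlane)
          simpa using this
        have h3 : HasDerivAt (fun y : ℂ => ((1 + x) ^ c - a j * (1 + y) ^ c) / (1 - a j))
            (-(a j * c) / (1 - a j)) 0 := ((h2.const_mul (a j)).const_sub _).div_const _
        have h4 := h3.clog (by simpa using hj')
        convert h4 using 1
        · rfl
        · rfl
        simp only [add_zero, Complex.one_cpow, mul_one]
        rw [div_div_div_eq, div_eq_div_iff (by exact hne) (by exact mul_ne_zero (ha1 j hj) hne)]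
        ring
      apply this.congr_of_eventuallyEq
      filter_upwards with y
      rw [hF]
    exact hder.deriv
  rw [key.deriv_eq]
  have hfin : HasDerivAt (fun x : ℂ => -(1/2) * ∑ j ∈ Finset.Ico 1 k,
      (-(a j * c) / ((1 + x) ^ c - a j)))
      (-(1/2) * ∑ j ∈ Finset.Ico 1 k, (a j * c ^ 2 / (1 - a j) ^ 2)) 0 := by
    refine HasDerivAt.const_mul _ (HasDerivAt.fun_sum ?_)
    intro j hj
    have h1 : HasDerivAt (fun x : ℂ => 1 + x) 1 0 := by
      simpa using (hasDerivAt_id (0:ℂ)).const_add 1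
    have h2 : HasDerivAt (fun x : ℂ => (1 + x) ^ c) c 0 := by
      have := h1.cpow_const (c := c) (by simpa using Complex.one_mem_slitPlane)
      simpa using this
    have h3 : HasDerivAt (fun x : ℂ => (1 + x) ^ c - a j) c 0 := h2.sub_const _
    have hne : (1 + (0:ℂ)) ^ c - a j ≠ 0 := by simpa using ha1 j hj
    have h4 := (h3.div_const 1).inv (by simpa using hne)
    have h5 := h4.const_mul (-(a j * c))
    convert h5 using 1
    · rfl
    · funext x; simp only [Pi.inv_apply, div_one, div_eq_mul_inv, inv_one, mul_one]
    · simp only [add_zero, Complex.one_cpow, div_one]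
      field_simp [ha1 j hj]
  rw [hfin.deriv, Finset.mul_sum, Finset.mul_sum]
  refine Finset.sum_congr rfl fun j hj => ?_
  show -(1/2) * (a j * c ^ 2 / (1 - a j) ^ 2)
      = -(1 / (2 * (k:ℂ) ^ 2)) * (a j / (1 - a j) ^ 2)
  rw [hc]
  field_simp
end
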